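/- Let K be a graph consisting of pairwise disjoint connected graphs S_1,…,S_r together with an additional vertex u adjacent to exactly one vertex v_j in each S_j. If minrk_q(S_j − v_j) = minrk_q(S_j) for every j ∈ [r], then minrk_q(K) = 1 + Σ_{j=1}^r minrk_q(S_j). -/

import Mathlib

open scoped Classical

/-- A matrix `M` fits the graph `G` if its diagonal entries are nonzero and its
entries at distinct non-adjacent pairs of vertices are zero. -/
def Fits {V F : Type} [Fintype V] [Field F]
    (G : SimpleGraph V) (M : Matrix V V F) : Prop :=
  (∀ u, M u u ≠ 0) ∧ ∀ u v, u ≠ v → ¬ G.Adj u v → M u v = 0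

/-- The min-rank of `G` over the field `F`: the minimum rank of a matrix fitting `G`. -/
noncomputable def minrk (F : Type) [Field F] {V : Type} [Fintype V]
    (G : SimpleGraph V) : ℕ :=
  sInf {r : ℕ | ∃ M : Matrix V V F, Fits G M ∧ M.rank = r}

open Matrix Submodule Module

section Aux

variable {F : Type} [Field F]

lemma rank_submatrix_le'' {m n m' n' : Type} [Fintype m] [Fintype n] [Fintype m'] [Fintype n']
    (A : Matrix m n F) (f : m' → m) (g : n' → n) :
    (A.submatrix f g).rank ≤ A.rank := by
  rw [Matrix.rank_eq_finrank_span_row, Matrix.rank_eq_finrank_span_row]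
  have h1 : Set.range (A.submatrix f g) ⊆ (LinearMap.funLeft F F g) '' (Set.range A) := by
    rintro x ⟨i, rfl⟩; exact ⟨A (f i), ⟨f i, rfl⟩, rfl⟩
  calc finrank F (span F (Set.range (A.submatrix f g)))
      ≤ finrank F (span F ((LinearMap.funLeft F F g) '' (Set.range A))) :=
        Submodule.finrank_mono (span_mono h1)
    _ = finrank F (Submodule.map (LinearMap.funLeft F F g) (span F (Set.range A))) := by
        rw [Submodule.map_span]
    _ ≤ finrank F (span F (Set.range A)) := Submodule.finrank_map_le _ _

lemma finrank_map_lt' {V₁ V₂ : Type} [AddCommGroup V₁] [Module F V₁] [AddCommGroup V₂]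
    [Module F V₂] [FiniteDimensional F V₁] (π : V₁ →ₗ[F] V₂) (p : Submodule F V₁) {x : V₁}
    (hx : x ∈ p) (hx0 : x ≠ 0) (hπ : π x = 0) :
    finrank F (Submodule.map π p) < finrank F p := by
  have h := LinearMap.finrank_range_add_finrank_ker (π.domRestrict p)
  rw [LinearMap.range_domRestrict] at h
  have hker : 0 < finrank F (LinearMap.ker (π.domRestrict p)) := by
    have : Nontrivial (LinearMap.ker (π.domRestrict p)) := by
      refine nontrivial_of_ne ⟨⟨x, hx⟩, by simp [LinearMap.mem_ker, hπ]⟩ 0 ?_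
      simp only [ne_eq, Submodule.mk_eq_zero]
      exact fun h => hx0 (by simpa using h)
    exact Module.finrank_pos_iff.mpr this
  omega

lemma row_mem_span' {m n m' : Type} [Fintype m] [Fintype n] [Fintype m']
    (A : Matrix m n F) (f : m' → m) (h : A.rank ≤ (A.submatrix f id).rank) (a : m) :
    A a ∈ span F (Set.range (A.submatrix f id)) := by
  have hle : span F (Set.range (A.submatrix f id)) ≤ span F (Set.range A) :=
    span_mono (by rintro x ⟨i, rfl⟩; exact ⟨f i, rfl⟩)
  have heq := Submodule.eq_of_le_of_finrank_le hle (by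
    have h1 := Matrix.rank_eq_finrank_span_row A
    have h2 := Matrix.rank_eq_finrank_span_row (A.submatrix f id)
    rw [h1, h2] at h; exact h)
  rw [heq]
  exact subset_span ⟨a, rfl⟩

/-- linear equiv between a pi-submodule and the product of the submodules -/
noncomputable def piSubEquiv {ι : Type} {φ : ι → Type} [∀ i, AddCommGroup (φ i)]
    [∀ i, Module F (φ i)] (P : ∀ i, Submodule F (φ i)) :
    ↥(Submodule.pi (Set.univ : Set ι) P) ≃ₗ[F] ∀ i, ↥(P i) where
  toFun x i := ⟨x.1 i, x.2 i (Set.mem_univ i)⟩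
  invFun y := ⟨fun i => y i, fun i _ => (y i).2⟩
  left_inv x := rfl
  right_inv y := rfl
  map_add' x y := rfl
  map_smul' c x := rfl

lemma rank_eq_sum_blocks {V ι : Type} [Fintype V] [Fintype ι]
    (M : Matrix V V F) (T : ι → Set V)
    (hcov : ∀ a : V, ∃ i, a ∈ T i)
    (hzero : ∀ i j, i ≠ j → ∀ a ∈ T i, ∀ b ∈ T j, M a b = 0) :
    M.rank = ∑ i, (M.submatrix (fun x : T i => (x : V)) (fun x : T i => (x : V))).rank := by
  set B : ∀ i, Matrix (T i) (T i) F :=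
    fun i => M.submatrix (fun x : T i => (x : V)) (fun x : T i => (x : V)) with hB
  set P : ∀ i, Submodule F (T i → F) := fun i => span F (Set.range (B i)) with hP
  set Φ : (V → F) →ₗ[F] ∀ i, (T i → F) :=
    LinearMap.pi (fun i => LinearMap.funLeft F F (fun x : T i => (x : V))) with hΦ
  have hinj : Function.Injective Φ := by
    rw [← LinearMap.ker_eq_bot, eq_bot_iff]
    intro f hf
    simp only [LinearMap.mem_ker] at hf
    have : f = 0 := by
      funext a
      obtain ⟨i, hi⟩ := hcov a
      have := congrFun (congrFun hf i) ⟨a, hi⟩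
      simpa [hΦ, LinearMap.funLeft] using this
    simp [this]
  have hmap : Submodule.map Φ (span F (Set.range M)) = Submodule.pi Set.univ P := by
    apply le_antisymm
    · rw [Submodule.map_span, span_le]
      rintro x ⟨y, ⟨a, rfl⟩, rfl⟩
      intro i _
      obtain ⟨i₀, hi₀⟩ := hcov a
      by_cases hii : i = i₀
      · subst hii
        have : Φ (M a) i = B i ⟨a, hi₀⟩ := rfl
        rw [this]
        exact subset_span ⟨_, rfl⟩
      · have : Φ (M a) i = 0 := by
          funext b
          exact hzero i₀ i (fun h => hii h.symm) a hi₀ b.1 b.2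
        rw [this]; exact zero_mem _
    · intro x hx
      have hxsum : x = ∑ i, Pi.single i (x i) := (Finset.univ_sum_single x).symm
      rw [hxsum]
      apply Submodule.sum_mem
      intro i _
      have h1 : Pi.single i (x i) ∈
          Submodule.map (LinearMap.single F (fun j => T j → F) i)
            (P i) := ⟨x i, hx i (Set.mem_univ i), rfl⟩
      refine Submodule.map_le_iff_le_comap.mpr ?_ h1
      rw [hP, span_le]
      rintro y ⟨a, rfl⟩
      simp only [SetLike.mem_coe, Submodule.mem_comap]
      have : (LinearMap.single F (fun j => T j → F) i) (B i a) = Φ (M a.1) := by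
        funext j b
        by_cases hj : j = i
        · subst hj; simp only [LinearMap.single_apply, Pi.single_eq_same]; rfl
        · have h0 : M a.1 b.1 = 0 := hzero i j (fun h => hj h.symm) a.1 a.2 b.1 b.2
          simp [LinearMap.single, Pi.single, Function.update, hj, hΦ, LinearMap.funLeft, h0]
          show (Pi.single i (B i a) : ∀ k, T k → F) j b = 0
          simp [Pi.single_eq_of_ne hj]
      rw [this]
      exact Submodule.mem_map_of_mem (subset_span ⟨a.1, rfl⟩)
  have h1 : M.rank = finrank F (span F (Set.range M)) := Matrix.rank_eq_finrank_span_row M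
  have h2 : finrank F (span F (Set.range M))
      = finrank F (Submodule.map Φ (span F (Set.range M))) :=
    (Submodule.equivMapOfInjective Φ hinj _).finrank_eq
  rw [h1, h2, hmap, (piSubEquiv P).finrank_eq, Module.finrank_pi_fintype]
  exact Finset.sum_congr rfl fun i _ => (Matrix.rank_eq_finrank_span_row (B i)).symm

lemma rank_pos_of_ne_zero {m n : Type} [Fintype m] [Fintype n]
    (A : Matrix m n F) (a : m) (b : n) (h : A a b ≠ 0) : 1 ≤ A.rank := by
  rw [Nat.one_le_iff_ne_zero]
  intro h0
  rw [Matrix.rank_eq_finrank_span_row] at h0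
  have := Submodule.finrank_eq_zero.mp h0
  have hmem : A a ∈ span F (Set.range A) := subset_span ⟨a, rfl⟩
  rw [show span F (Set.range A) = ⊥ from this, Submodule.mem_bot] at hmem
  exact h (by rw [hmem]; rfl)

variable {V : Type} [Fintype V] {G : SimpleGraph V}

lemma fits_one : Fits G (1 : Matrix V V F) :=
  ⟨fun a => by simp, fun a b hab _ => Matrix.one_apply_ne hab⟩

lemma minrk_set_nonempty (G : SimpleGraph V) :
    {r : ℕ | ∃ M : Matrix V V F, Fits G M ∧ M.rank = r}.Nonempty :=
  ⟨_, 1, fits_one, rfl⟩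

lemma minrk_le_rank {M : Matrix V V F} (h : Fits G M) : minrk F G ≤ M.rank :=
  Nat.sInf_le ⟨M, h, rfl⟩

lemma exists_minrk (G : SimpleGraph V) :
    ∃ M : Matrix V V F, Fits G M ∧ M.rank = minrk F G :=
  Nat.sInf_mem (minrk_set_nonempty G)

lemma fits_submatrix {M : Matrix V V F} (h : Fits G M) (T : Set V) :
    Fits (G.induce T) (M.submatrix (fun x : T => (x : V)) (fun x : T => (x : V))) := by
  constructor
  · intro a; exact h.1 a.1
  · intro a b hab hnadj
    refine h.2 a.1 b.1 (fun hc => hab (Subtype.ext hc)) (fun hc => hnadj ?_)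
    simpa using hc

lemma fits_transpose {M : Matrix V V F} (h : Fits G M) : Fits G Mᵀ := by
  refine ⟨fun a => h.1 a, fun a b hab hnadj => ?_⟩
  exact h.2 b a hab.symm (fun hc => hnadj hc.symm)

end Aux

section Key

variable {W F : Type} [Fintype W] [Field F]

lemma cross_zero (G : SimpleGraph W) {r : ℕ} (S : Fin r → Set W) (u : W) (v : Fin r → W)
    (hdisj : ∀ i j, i ≠ j → Disjoint (S i) (S j))
    (hu : ∀ j, u ∉ S j)
    (hedges : ∀ a b, G.Adj a b →
      (∃ j, a ∈ S j ∧ b ∈ S j) ∨ (a = u ∧ ∃ j, b = v j) ∨ (b = u ∧ ∃ j, a = v j))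
    {M : Matrix W W F} (hM : Fits G M) :
    ∀ i j, i ≠ j → ∀ a ∈ S i, ∀ b ∈ S j, M a b = 0 := by
  have huniq : ∀ i j a, a ∈ S i → a ∈ S j → i = j := by
    intro i j a hi hj
    by_contra hij
    exact Set.disjoint_left.mp (hdisj i j hij) hi hj
  intro i j hij a ha b hb
  have hne : a ≠ b := fun h => hij (huniq i j a ha (h ▸ hb))
  have hnadj : ¬ G.Adj a b := by
    intro h
    rcases hedges a b h with ⟨k, h1, h2⟩ | ⟨h1, _⟩ | ⟨h1, _⟩
    · exact hij ((huniq i k a ha h1).trans (huniq k j b h2 hb))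
    · exact hu i (h1 ▸ ha)
    · exact hu j (h1 ▸ hb)
  exact hM.2 a b hne hnadj

lemma urow_zero (G : SimpleGraph W) {r : ℕ} (S : Fin r → Set W) (u : W) (v : Fin r → W)
    (hdisj : ∀ i j, i ≠ j → Disjoint (S i) (S j))
    (hu : ∀ j, u ∉ S j)
    (hv : ∀ j, v j ∈ S j)
    (hedges : ∀ a b, G.Adj a b →
      (∃ j, a ∈ S j ∧ b ∈ S j) ∨ (a = u ∧ ∃ j, b = v j) ∨ (b = u ∧ ∃ j, a = v j))
    {M : Matrix W W F} (hM : Fits G M) :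
    ∀ i, ∀ b ∈ S i, b ≠ v i → M u b = 0 := by
  have huniq : ∀ i j a, a ∈ S i → a ∈ S j → i = j := by
    intro i j a hi hj
    by_contra hij
    exact Set.disjoint_left.mp (hdisj i j hij) hi hj
  intro i b hb hbv
  have hnadj : ¬ G.Adj u b := by
    intro h
    rcases hedges u b h with ⟨k, h1, _⟩ | ⟨_, k, h2⟩ | ⟨h1, _⟩
    · exact hu k h1
    · exact hbv (by rw [h2, huniq k i (v k) (hv k) (h2 ▸ hb)])
    · exact hu i (h1 ▸ hb)
  exact hM.2 u b (fun h => hu i (h ▸ hb)) hnadj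

lemma key_entry (G : SimpleGraph W) {r : ℕ} (S : Fin r → Set W) (u : W) (v : Fin r → W)
    (hdisj : ∀ i j, i ≠ j → Disjoint (S i) (S j))
    (hu : ∀ j, u ∉ S j)
    (hv : ∀ j, v j ∈ S j)
    (hcover : {u} ∪ (⋃ j, S j) = Set.univ)
    (hedges : ∀ a b, G.Adj a b →
      (∃ j, a ∈ S j ∧ b ∈ S j) ∨ (a = u ∧ ∃ j, b = v j) ∨ (b = u ∧ ∃ j, a = v j))
    (hnodrop : ∀ j, minrk F (G.induce (S j \ {v j})) = minrk F (G.induce (S j)))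
    (M : Matrix W W F) (hM : Fits G M)
    (hrk : M.rank ≤ ∑ j, minrk F (G.induce (S j))) (j : Fin r) :
    M u (v j) = 0 := by
  classical
  set m : Fin r → ℕ := fun i => minrk F (G.induce (S i)) with hm
  have huniq : ∀ i j a, a ∈ S i → a ∈ S j → i = j := by
    intro i j a hi hj
    by_contra hij
    exact Set.disjoint_left.mp (hdisj i j hij) hi hj
  have hcov' : ∀ a : W, a ≠ u → ∃ i, a ∈ S i := by
    intro a ha
    have : a ∈ ({u} : Set W) ∪ ⋃ i, S i := by rw [hcover]; trivial
    rcases this with h | h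
    · exact absurd h ha
    · exact Set.mem_iUnion.mp h
  have hrk' : M.rank ≤ ∑ i, m i := hrk
  have H1 := cross_zero G S u v hdisj hu hedges hM
  set B : ∀ i : Fin r, Matrix (S i) (S i) F :=
    fun i => M.submatrix (fun x : S i => (x : W)) (fun x : S i => (x : W)) with hBdef
  have hBfits : ∀ i, Fits (G.induce (S i)) (B i) := fun i => fits_submatrix hM (S i)
  have hBge : ∀ i, m i ≤ (B i).rank := fun i => minrk_le_rank (hBfits i)
  -- the submatrix away from u
  set V' : Set W := {a | a ≠ u} with hV'
  set M' : Matrix V' V' F :=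
    M.submatrix (fun x : V' => (x : W)) (fun x : V' => (x : W)) with hM'def
  set T : Fin r → Set V' := fun i => {x : V' | (x : W) ∈ S i} with hT
  have hcovT : ∀ x : V', ∃ i, x ∈ T i := fun x => hcov' x.1 x.2
  have hrkM' : M'.rank = ∑ i, (B i).rank := by
    rw [rank_eq_sum_blocks M' T hcovT
      (fun i j hij a ha b hb => H1 i j hij a.1 ha b.1 hb)]
    refine Finset.sum_congr rfl fun i _ => ?_
    let e : (S i) ≃ (T i) :=
      { toFun := fun a => ⟨⟨a.1, fun h => hu i (h ▸ a.2)⟩, a.2⟩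
        invFun := fun x => ⟨x.1.1, x.2⟩
        left_inv := fun a => rfl
        right_inv := fun x => rfl }
    have heq : B i = (M'.submatrix (fun x : T i => (x : V')) (fun x : T i => (x : V'))).submatrix
        e e := rfl
    rw [heq, Matrix.rank_submatrix]
  -- rank chain
  set R : Matrix V' W F := M.submatrix (fun x : V' => (x : W)) id with hRdef
  have hM'R : M' = R.submatrix id (fun x : V' => (x : W)) := rfl
  have c1 : M'.rank ≤ R.rank := by rw [hM'R]; exact rank_submatrix_le'' R _ _
  have c2 : R.rank ≤ M.rank := rank_submatrix_le'' M _ _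
  have csum : ∑ i, m i ≤ ∑ i, (B i).rank := Finset.sum_le_sum fun i _ => hBge i
  have hBj : (B j).rank ≤ m j := by
    by_contra hlt
    push_neg at hlt
    have : ∑ i, m i < ∑ i, (B i).rank :=
      Finset.sum_lt_sum (fun i _ => hBge i) ⟨j, Finset.mem_univ j, hlt⟩
    omega
  have hrkR : M.rank ≤ R.rank := by omega
  have hrow := row_mem_span' M (fun x : V' => (x : W)) hrkR u
  -- project onto coordinates S j
  set π : (W → F) →ₗ[F] ((S j) → F) := LinearMap.funLeft F F (fun x : S j => (x : W)) with hπ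
  set P : Submodule F ((S j) → F) := span F (Set.range (B j)) with hPdef
  set x : (S j) → F := π (M u) with hx
  have hxP : x ∈ P := by
    have hsub : π '' Set.range R ⊆ (P : Set ((S j) → F)) := by
      rintro y ⟨z, ⟨a, rfl⟩, rfl⟩
      obtain ⟨i, hi⟩ := hcov' a.1 a.2
      by_cases hij : i = j
      · subst hij
        exact subset_span ⟨⟨a.1, hi⟩, rfl⟩
      · have : π (R a) = 0 := by
          funext b
          exact H1 i j hij a.1 hi b.1 b.2
        rw [this]; exact zero_mem _
    have hmem : x ∈ Submodule.map π (span F (Set.range R)) :=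
      Submodule.mem_map_of_mem hrow
    rw [Submodule.map_span] at hmem
    exact span_le.mpr hsub hmem
  have hxval : ∀ b : (S j), b.1 ≠ v j → x b = 0 :=
    fun b hb => urow_zero G S u v hdisj hu hv hedges hM j b.1 b.2 hb
  by_contra hne
  have hx0 : x ≠ 0 := by
    intro h
    exact hne (congrFun h ⟨v j, hv j⟩)
  set f : (↥(S j \ {v j})) → (S j) := fun y => ⟨y.1, y.2.1⟩ with hf
  set π₂ : ((S j) → F) →ₗ[F] ((↥(S j \ {v j})) → F) := LinearMap.funLeft F F f with hπ₂
  have hπ₂x : π₂ x = 0 := by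
    funext y
    exact hxval (f y) y.2.2
  set D : Matrix (S j) (↥(S j \ {v j})) F := (B j).submatrix id f with hDdef
  have hrankD : D.rank = finrank F (Submodule.map π₂ P) := by
    have hr : Set.range D.row = π₂ '' Set.range (B j) := by
      exact (Set.range_comp (⇑π₂) (B j))
    rw [Matrix.rank_eq_finrank_span_row, hr, ← Submodule.map_span]
  have hlt : D.rank < (B j).rank := by
    rw [hrankD, Matrix.rank_eq_finrank_span_row (B j)]
    exact finrank_map_lt' π₂ P hxP hx0 hπ₂x
  set C : Matrix (↥(S j \ {v j})) (↥(S j \ {v j})) F :=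
    M.submatrix (fun y : ↥(S j \ {v j}) => (y : W)) (fun y : ↥(S j \ {v j}) => (y : W)) with hC
  have hCfits : Fits (G.induce (S j \ {v j})) C := fits_submatrix hM (S j \ {v j})
  have hCD : C = D.submatrix f id := rfl
  have hCle : C.rank ≤ D.rank := by rw [hCD]; exact rank_submatrix_le'' D _ _
  have hCge : m j ≤ C.rank :=
    le_trans (le_of_eq (hnodrop j).symm) (minrk_le_rank hCfits)
  omega

end Key

theorem minrk_star_of_branches_of_no_drop {W F : Type} [Fintype W] [Field F] [Fintype F]
    (G : SimpleGraph W) (r : ℕ) (S : Fin r → Set W) (u : W) (v : Fin r → W)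
    (hdisj : ∀ i j, i ≠ j → Disjoint (S i) (S j))
    (hu : ∀ j, u ∉ S j)
    (hv : ∀ j, v j ∈ S j)
    (hcover : {u} ∪ (⋃ j, S j) = Set.univ)
    (hconn : ∀ j, (G.induce (S j)).Connected)
    (hadj : ∀ j, G.Adj u (v j))
    (hedges : ∀ a b, G.Adj a b →
      (∃ j, a ∈ S j ∧ b ∈ S j) ∨ (a = u ∧ ∃ j, b = v j) ∨ (b = u ∧ ∃ j, a = v j))
    (hnodrop : ∀ j, minrk F (G.induce (S j \ {v j})) = minrk F (G.induce (S j))) :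
    minrk F G = 1 + ∑ j, minrk F (G.induce (S j)) := by
  classical
  set m : Fin r → ℕ := fun i => minrk F (G.induce (S i)) with hm
  have huniq : ∀ i j a, a ∈ S i → a ∈ S j → i = j := by
    intro i j a hi hj
    by_contra hij
    exact Set.disjoint_left.mp (hdisj i j hij) hi hj
  have hcov' : ∀ a : W, a ≠ u → ∃ i, a ∈ S i := by
    intro a ha
    have : a ∈ ({u} : Set W) ∪ ⋃ i, S i := by rw [hcover]; trivial
    rcases this with h | h
    · exact absurd h ha
    · exact Set.mem_iUnion.mp h
  set T : Option (Fin r) → Set W := fun o => o.elim {u} S with hT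
  have hcovT : ∀ a : W, ∃ o, a ∈ T o := by
    intro a
    by_cases ha : a = u
    · exact ⟨none, by simp [hT, ha]⟩
    · obtain ⟨i, hi⟩ := hcov' a ha
      exact ⟨some i, hi⟩
  apply le_antisymm
  · -- UPPER BOUND: construct a fitting matrix of rank ≤ 1 + ∑ m
    choose Mo hMofits hMorank using fun i => exists_minrk (F := F) (G.induce (S i))
    set N : Fin r → Matrix W W F := fun i a b =>
      if ha : a ∈ S i then if hb : b ∈ S i then Mo i ⟨a, ha⟩ ⟨b, hb⟩ else 0 else 0 with hN
    set E : Matrix W W F := fun a b => if a = u ∧ b = u then 1 else 0 with hE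
    set A : Matrix W W F := E + ∑ i, N i with hA
    have hAapp : ∀ a b, A a b = E a b + ∑ i, N i a b := by
      intro a b
      rw [hA, Matrix.add_apply]
      congr 1
      simp [Matrix.sum_apply]
    have hNzero : ∀ i a b, a ∉ S i → N i a b = 0 := by
      intro i a b ha; simp [hN, ha]
    have hNzero' : ∀ i a b, b ∉ S i → N i a b = 0 := by
      intro i a b hb
      by_cases ha : a ∈ S i <;> simp [hN, ha, hb]
    have hAblock : ∀ i, ∀ a ∈ S i, ∀ b ∈ S i,
        ∀ (ha : a ∈ S i) (hb : b ∈ S i), A a b = Mo i ⟨a, ha⟩ ⟨b, hb⟩ := by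
      intro i a hai b hbi ha hb
      rw [hAapp]
      have hEz : E a b = 0 := by
        rw [hE]
        simp only [ite_eq_right_iff, and_imp]
        intro h1 _
        exact absurd (h1 ▸ hai) (hu i)
      rw [hEz, zero_add, Finset.sum_eq_single i]
      · simp [hN, ha, hb]
      · intro k _ hk
        exact hNzero k a b (fun h => hk (huniq k i a h ha))
      · simp
    have hAfits : Fits G A := by
      constructor
      · intro a
        by_cases ha : a = u
        · rw [hAapp]
          have hz : ∀ i, N i a a = 0 := fun i => hNzero i a a (fun h => hu i (ha ▸ h))
          rw [ha] at hz
          simp [hE, ha, hz]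
        · obtain ⟨i, hi⟩ := hcov' a ha
          rw [hAblock i a hi a hi hi hi]
          exact (hMofits i).1 _
      · intro a b hab hnadj
        rw [hAapp]
        have hEz : E a b = 0 := by
          rw [hE]
          simp only [ite_eq_right_iff, and_imp]
          intro h1 h2
          exact absurd (h1.trans h2.symm) hab
        rw [hEz, zero_add]
        apply Finset.sum_eq_zero
        intro i _
        by_cases ha : a ∈ S i
        · by_cases hb : b ∈ S i
          · have : ¬ (G.induce (S i)).Adj ⟨a, ha⟩ ⟨b, hb⟩ := by
              intro h
              exact hnadj (by simpa using h)
            have hne : (⟨a, ha⟩ : S i) ≠ ⟨b, hb⟩ := fun h =>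
              hab (congrArg Subtype.val h)
            simp [hN, ha, hb, (hMofits i).2 _ _ hne this]
          · exact hNzero' i a b hb
        · exact hNzero i a b ha
    have hrankA : A.rank ≤ 1 + ∑ i, m i := by
      have hz : ∀ o o', o ≠ o' → ∀ a ∈ T o, ∀ b ∈ T o', A a b = 0 := by
        intro o o' hoo a ha b hb
        rw [hAapp]
        have hEz : E a b = 0 := by
          rw [hE]
          simp only [ite_eq_right_iff, and_imp]
          intro h1 h2
          exfalso
          apply hoo
          match o, o' with
          | none, none => rfl
          | none, some i => exact absurd (h2 ▸ hb) (hu i)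
          | some i, none => exact absurd (h1 ▸ ha) (hu i)
          | some i, some k => exact absurd (h1 ▸ ha) (hu i)
        rw [hEz, zero_add]
        apply Finset.sum_eq_zero
        intro i _
        match o, o' with
        | none, none => exact absurd rfl hoo
        | none, some k =>
          exact hNzero i a b (fun h => hu i (by simpa [hT] using ha ▸ h))
        | some k, none =>
          exact hNzero' i a b (fun h => hu i (by simpa [hT] using hb ▸ h))
        | some k, some k' =>
          by_cases hik : i = k
          · subst hik
            exact hNzero' i a b (fun h =>
              hoo (by rw [huniq i k' b h hb]))
          · exact hNzero i a b (fun h => hik (huniq i k a h ha))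
      rw [rank_eq_sum_blocks A T hcovT hz, Fintype.sum_option]
      have h1 : (A.submatrix (fun x : T none => (x : W)) (fun x : T none => (x : W))).rank
          ≤ 1 := by
        refine le_trans (Matrix.rank_le_card_width _) ?_
        simp [hT]
      have h2 : ∀ i, (A.submatrix (fun x : T (some i) => (x : W))
          (fun x : T (some i) => (x : W))).rank = m i := by
        intro i
        have : (A.submatrix (fun x : T (some i) => (x : W))
            (fun x : T (some i) => (x : W))) = Mo i := by
          ext a b
          exact hAblock i a.1 a.2 b.1 b.2 a.2 b.2
        rw [this]; exact hMorank i
      exact add_le_add h1 (le_of_eq (Finset.sum_congr rfl fun i _ => h2 i))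
    exact le_trans (minrk_le_rank hAfits) hrankA
  · -- LOWER BOUND
    refine le_csInf (minrk_set_nonempty G) ?_
    rintro n ⟨M, hMfits, rfl⟩
    by_contra hcon
    push_neg at hcon
    have hrk : M.rank ≤ ∑ i, m i := by
      have h2 : M.rank < 1 + ∑ i, m i := hcon
      omega
    have h1 : ∀ i, M u (v i) = 0 :=
      key_entry G S u v hdisj hu hv hcover hedges hnodrop M hMfits hrk
    have hMT : Fits G Mᵀ := fits_transpose hMfits
    have hrkT : Mᵀ.rank ≤ ∑ i, m i := by rw [Matrix.rank_transpose]; exact hrk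
    have h2 : ∀ i, M (v i) u = 0 := fun i =>
      key_entry G S u v hdisj hu hv hcover hedges hnodrop Mᵀ hMT hrkT i
    have hrow0 : ∀ b, b ≠ u → M u b = 0 := by
      intro b hb
      obtain ⟨i, hi⟩ := hcov' b hb
      by_cases hbv : b = v i
      · rw [hbv]; exact h1 i
      · exact urow_zero G S u v hdisj hu hv hedges hMfits i b hi hbv
    have hcol0 : ∀ b, b ≠ u → M b u = 0 := by
      intro b hb
      obtain ⟨i, hi⟩ := hcov' b hb
      by_cases hbv : b = v i
      · rw [hbv]; exact h2 i
      · exact urow_zero G S u v hdisj hu hv hedges hMT i b hi hbv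
    have H1 := cross_zero G S u v hdisj hu hedges hMfits
    have hz : ∀ o o', o ≠ o' → ∀ a ∈ T o, ∀ b ∈ T o', M a b = 0 := by
      intro o o' hoo a ha b hb
      match o, o' with
      | none, none => exact absurd rfl hoo
      | none, some k =>
        have hau : a = u := ha
        exact hau ▸ hrow0 b (fun h => hu k (h ▸ hb))
      | some k, none =>
        have hbu : b = u := hb
        exact hbu ▸ hcol0 a (fun h => hu k (h ▸ ha))
      | some k, some k' =>
        exact H1 k k' (fun h => hoo (by rw [h])) a ha b hb
    have hdecomp := rank_eq_sum_blocks M T hcovT hz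
    rw [Fintype.sum_option] at hdecomp
    have hblock0 : 1 ≤ (M.submatrix (fun x : T none => (x : W))
        (fun x : T none => (x : W))).rank := by
      refine rank_pos_of_ne_zero _ ⟨u, rfl⟩ ⟨u, rfl⟩ ?_
      exact hMfits.1 u
    have hblocks : ∀ i, m i ≤ (M.submatrix (fun x : T (some i) => (x : W))
        (fun x : T (some i) => (x : W))).rank := by
      intro i
      exact minrk_le_rank (fits_submatrix hMfits (S i))
    have : 1 + ∑ i, m i ≤ M.rank := by
      rw [hdecomp]
      exact add_le_add hblock0 (Finset.sum_le_sum fun i _ => hblocks i)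
    omega
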